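/- Let p be a prime and G a finite group. The p-decomposable residual of G (the smallest normal subgroup N such that G/N is the direct product of its Sylow p-subgroup and a normal p-complement, i.e., every p-element of G/N commutes with every p'-element) is generated by all commutators [a,b] where a ∈ G is a p-element and b ∈ G is an element of prime power order coprime to p. -/

import Mathlib

open Subgroup Pointwise
open scoped commutatorElement

/-- `H` is a normal subgroup of `K` (both viewed as subgroups of the ambient group `G`). -/
def NormalIn {G : Type*} [Group G] (H K : Subgroup G) : Prop :=
  H ≤ K ∧ ∀ k ∈ K, ∀ h ∈ H, k * h * k⁻¹ ∈ H

/-- `H` is subnormal in `K`: there is a chain `H = c 0 ⊴ c 1 ⊴ ... ⊴ c n = K`. -/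
def SubnormalIn {G : Type*} [Group G] (H K : Subgroup G) : Prop :=
  ∃ (n : ℕ) (c : ℕ → Subgroup G), c 0 = H ∧ c n = K ∧ ∀ i < n, NormalIn (c i) (c (i + 1))

/-- The hypercenter: the limit of the upper central series. -/
def hypercenter (G : Type*) [Group G] : Subgroup G := ⨆ n, Subgroup.upperCentralSeries G n

/-- The nilpotent residual: the intersection of all normal subgroups with nilpotent quotient. -/
def nilpotentResidual (G : Type*) [Group G] : Subgroup G :=
  ⨅ N ∈ {N : Subgroup G |
    ∃ h : N.Normal, @Group.IsNilpotent (G ⧸ N) (@QuotientGroup.Quotient.group G _ N h)}, N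

/-- The Fitting subgroup: the join of all normal nilpotent subgroups. -/
def fitting (G : Type*) [Group G] : Subgroup G :=
  ⨆ N ∈ {N : Subgroup G | N.Normal ∧ Group.IsNilpotent N}, N

/-- `N` is a minimal normal subgroup. -/
def IsMinimalNormal {G : Type*} [Group G] (N : Subgroup G) : Prop :=
  N.Normal ∧ N ≠ ⊥ ∧ ∀ K : Subgroup G, K.Normal → K ≤ N → K = ⊥ ∨ K = N

/-- The socle: the join of all minimal normal subgroups. -/
def socle (G : Type*) [Group G] : Subgroup G :=
  ⨆ N ∈ {N : Subgroup G | IsMinimalNormal N}, N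

/-- A group is supersolvable if it has a chain of normal subgroups with cyclic factors. -/
def IsSupersolvable (G : Type*) [Group G] : Prop :=
  ∃ (n : ℕ) (c : ℕ → Subgroup G), c 0 = ⊥ ∧ c n = ⊤ ∧ (∀ i, (c i).Normal) ∧
    ∀ i < n, c i ≤ c (i + 1) ∧ ∃ g : G, c (i + 1) = c i ⊔ Subgroup.zpowers g

/-- A subgroup `H` is pronormal if `H` and each conjugate `H^g` are conjugate in their join. -/
def Pronormal {G : Type*} [Group G] (H : Subgroup G) : Prop :=
  ∀ g : G, ∃ x ∈ H ⊔ H.map (MulAut.conj g).toMonoidHom,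
    H.map (MulAut.conj g).toMonoidHom = H.map (MulAut.conj x).toMonoidHom

/-- A subgroup `H` is abnormal if `g ∈ ⟨H, H^g⟩` for all `g`. -/
def Abnormal {G : Type*} [Group G] (H : Subgroup G) : Prop :=
  ∀ g : G, g ∈ H ⊔ H.map (MulAut.conj g).toMonoidHom

/-- `Δ(G)`: the intersection of all abnormal maximal subgroups. -/
def abnormalDelta (G : Type*) [Group G] : Subgroup G :=
  ⨅ M ∈ {M : Subgroup G | IsCoatom M ∧ Abnormal M}, M

/-- The generalized Fitting subgroup `F̃(G)`: the preimage of `Soc(G/Φ(G))` in `G`. -/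
def genFitting (G : Type*) [Group G] : Subgroup G :=
  (socle (G ⧸ frattini G)).comap (QuotientGroup.mk' (frattini G))

/-- A group is `p`-decomposable if every `p`-element commutes with every `p'`-element. -/
def IsPDecomposable (p : ℕ) (K : Type*) [Group K] : Prop :=
  ∀ a b : K, (∃ n, orderOf a = p ^ n) → Nat.Coprime (orderOf b) p → Commute a b


section AuxLemmas

variable {G : Type*} [Group G]

/-- Split an element according to a coprime factorization of its order. -/
lemma split_orderOf (g : G) {m n : ℕ} (h : orderOf g = m * n) (hco : Nat.Coprime m n) :
    ∃ c d : G, g = c * d ∧ Commute c d ∧ orderOf c ∣ m ∧ orderOf d ∣ n ∧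
      orderOf c ∣ orderOf g ∧ orderOf d ∣ orderOf g := by
  have hbez : ((1 : ℕ) : ℤ) = m * Nat.gcdA m n + n * Nat.gcdB m n := by
    rw [← hco]; exact Nat.gcd_eq_gcd_ab m n
  refine ⟨g ^ ((n : ℤ) * Nat.gcdB m n), g ^ ((m : ℤ) * Nat.gcdA m n), ?_, ?_, ?_, ?_, ?_, ?_⟩
  · have he : (n : ℤ) * Nat.gcdB m n + (m : ℤ) * Nat.gcdA m n = 1 := by
      push_cast at hbez; linarith
    rw [← zpow_add, he, zpow_one]
  · exact Commute.zpow_zpow_self g _ _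
  · apply orderOf_dvd_of_pow_eq_one
    rw [← zpow_natCast, ← zpow_mul]
    have : (n : ℤ) * Nat.gcdB m n * m = (orderOf g : ℤ) * Nat.gcdB m n := by
      rw [h]; push_cast; ring
    rw [this, zpow_mul, zpow_natCast, pow_orderOf_eq_one, one_zpow]
  · apply orderOf_dvd_of_pow_eq_one
    rw [← zpow_natCast, ← zpow_mul]
    have : (m : ℤ) * Nat.gcdA m n * n = (orderOf g : ℤ) * Nat.gcdA m n := by
      rw [h]; push_cast; ring
    rw [this, zpow_mul, zpow_natCast, pow_orderOf_eq_one, one_zpow]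
  · apply orderOf_dvd_of_pow_eq_one
    rw [← zpow_natCast, ← zpow_mul, mul_comm ((n : ℤ) * _), zpow_mul, zpow_natCast,
      pow_orderOf_eq_one, one_zpow]
  · apply orderOf_dvd_of_pow_eq_one
    rw [← zpow_natCast, ← zpow_mul, mul_comm ((m : ℤ) * _), zpow_mul, zpow_natCast,
      pow_orderOf_eq_one, one_zpow]

/-- Extract the `ρ`-part of an element of a finite group. -/
lemma exists_primePow_part [Finite G] (g : G) (ρ : ℕ) (hρ : ρ.Prime) :
    ∃ c d : G, g = c * d ∧ Commute c d ∧ (∃ k, orderOf c = ρ ^ k) ∧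
      Nat.Coprime (orderOf d) ρ ∧ orderOf d ∣ orderOf g := by
  have h0 : orderOf g ≠ 0 := (orderOf_pos g).ne'
  obtain ⟨c, d, hg, hcd, hc, hd, _, hdg⟩ :=
    split_orderOf g (Nat.ordProj_mul_ordCompl_eq_self (orderOf g) ρ).symm
      ((Nat.coprime_ordCompl hρ h0).pow_left _)
  obtain ⟨k, _, hk⟩ := (Nat.dvd_prime_pow hρ).mp hc
  exact ⟨c, d, hg, hcd, ⟨k, hk⟩,
    ((Nat.coprime_ordCompl hρ h0).symm.coprime_dvd_left hd), hdg⟩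

/-- A `ρ`-element of the image of a hom lifts to a `ρ`-element (with the same image). -/
lemma lift_primePow {Q : Type*} [Group Q] [Finite G] (f : G →* Q) (g : G) (ρ : ℕ)
    (hρ : ρ.Prime) (hfg : ∃ n, orderOf (f g) = ρ ^ n) :
    ∃ c : G, f c = f g ∧ ∃ k, orderOf c = ρ ^ k := by
  obtain ⟨c, d, hg, hcd, ⟨k, hk⟩, hdρ, _⟩ := exists_primePow_part g ρ hρ
  obtain ⟨n, hn⟩ := hfg
  refine ⟨c, ?_, k, hk⟩
  have hfd1 : f d = 1 := by
    have h1 : Commute ((f c)⁻¹) (f g) := by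
      have : Commute (f c) (f d) := hcd.map f
      have : Commute (f c) (f g) := by rw [hg, map_mul]; exact (Commute.refl _).mul_right this
      exact this.inv_left
    have hfd : f d = (f c)⁻¹ * f g := by rw [hg, map_mul, inv_mul_cancel_left]
    have hdvd1 : orderOf (f d) ∣ ρ ^ (k + n) := by
      rw [hfd]
      refine h1.orderOf_mul_dvd_lcm.trans (Nat.lcm_dvd ?_ ?_)
      · rw [orderOf_inv]
        exact ((orderOf_map_dvd f c).trans (dvd_of_eq hk)).trans
          (pow_dvd_pow ρ (Nat.le_add_right k n))
      · exact (dvd_of_eq hn).trans (pow_dvd_pow ρ (Nat.le_add_left n k))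
    have hdvd2 : orderOf (f d) ∣ orderOf d := orderOf_map_dvd f d
    have : orderOf (f d) = 1 :=
      Nat.eq_one_of_dvd_coprimes (hdρ.pow_right (k + n)).symm hdvd1 hdvd2
    rwa [orderOf_eq_one_iff] at this
  rw [hg, map_mul, hfd1, mul_one]

/-- If `a` commutes with all prime-power-order elements of order coprime to a prime `p`,
then `a` commutes with every element of order coprime to `p`. -/
lemma commute_of_commute_primePow {K : Type*} [Group K] [Finite K] {p : ℕ} (hp : p.Prime)
    (a : K) (h : ∀ b : K, (∃ q n, Nat.Prime q ∧ q ≠ p ∧ orderOf b = q ^ n) → Commute a b) :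
    ∀ b : K, Nat.Coprime (orderOf b) p → Commute a b := by
  have key : ∀ N : ℕ, ∀ b : K, orderOf b = N → Nat.Coprime (orderOf b) p → Commute a b := by
    intro N
    induction N using Nat.strong_induction_on with
    | _ N ih =>
      intro b hbN hbco
      rcases eq_or_ne (orderOf b) 1 with h1 | h1
      · rw [orderOf_eq_one_iff] at h1
        rw [h1]; exact Commute.one_right a
      have hq : (orderOf b).minFac.Prime := Nat.minFac_prime h1
      obtain ⟨c, d, hb, hcd, ⟨k, hk⟩, hdq, hdvd⟩ := exists_primePow_part b _ hq
      have hqp : (orderOf b).minFac ≠ p := by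
        intro he
        have hcop : Nat.Coprime (orderOf b).minFac p :=
          hbco.coprime_dvd_left (Nat.minFac_dvd _)
        rw [he, Nat.Coprime, Nat.gcd_self] at hcop
        exact hp.ne_one hcop
      have hac : Commute a c := h c ⟨_, k, hq, hqp, hk⟩
      have hdlt : orderOf d < N := by
        rw [← hbN]
        refine lt_of_le_of_ne (Nat.le_of_dvd (orderOf_pos b) hdvd) ?_
        intro he
        have : (orderOf b).minFac ∣ orderOf d := he ▸ Nat.minFac_dvd _
        have := Nat.eq_one_of_dvd_coprimes hdq this dvd_rfl
        exact hq.ne_one this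
      have had : Commute a d :=
        ih _ hdlt d rfl (hbco.coprime_dvd_left hdvd)
      rw [hb]; exact hac.mul_right had
  exact fun b => key (orderOf b) b rfl

end AuxLemmas

theorem pDecomposable_residual_eq_closure_commutators {G : Type*} [Group G] [Finite G]
    (p : ℕ) (hp : p.Prime) :
    ∃ hN : (Subgroup.closure {x : G | ∃ a b : G, (∃ n, orderOf a = p ^ n) ∧
        (∃ q n, Nat.Prime q ∧ q ≠ p ∧ orderOf b = q ^ n) ∧ x = ⁅a, b⁆}).Normal,
      (@IsPDecomposable p
        (G ⧸ Subgroup.closure {x : G | ∃ a b : G, (∃ n, orderOf a = p ^ n) ∧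
          (∃ q n, Nat.Prime q ∧ q ≠ p ∧ orderOf b = q ^ n) ∧ x = ⁅a, b⁆})
        (@QuotientGroup.Quotient.group G _ _ hN)) ∧
      ∀ M : Subgroup G, ∀ hM : M.Normal,
        @IsPDecomposable p (G ⧸ M) (@QuotientGroup.Quotient.group G _ M hM) →
          Subgroup.closure {x : G | ∃ a b : G, (∃ n, orderOf a = p ^ n) ∧
            (∃ q n, Nat.Prime q ∧ q ≠ p ∧ orderOf b = q ^ n) ∧ x = ⁅a, b⁆} ≤ M := by
  set S : Set G := {x : G | ∃ a b : G, (∃ n, orderOf a = p ^ n) ∧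
      (∃ q n, Nat.Prime q ∧ q ≠ p ∧ orderOf b = q ^ n) ∧ x = ⁅a, b⁆} with hS
  -- conjugation invariance of S
  have hconj : ∀ g : G, (fun x => g * x * g⁻¹) '' S ⊆ S := by
    rintro g _ ⟨x, ⟨a, b, ⟨n, han⟩, ⟨q, m, hq, hqp, hbm⟩, rfl⟩, rfl⟩
    refine ⟨g * a * g⁻¹, g * b * g⁻¹, ⟨n, ?_⟩, ⟨q, m, hq, hqp, ?_⟩, ?_⟩
    · rw [← han]
      exact orderOf_injective (MulAut.conj g).toMonoidHom (MulAut.conj g).injective a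
    · rw [← hbm]
      exact orderOf_injective (MulAut.conj g).toMonoidHom (MulAut.conj g).injective b
    · have := map_commutatorElement (MulAut.conj g).toMonoidHom a b
      simp only [commutatorElement_def]; group
  have hN : (Subgroup.closure S).Normal := by
    constructor
    intro x hx g
    have hmem : (MulAut.conj g).toMonoidHom x ∈
        (Subgroup.closure S).map (MulAut.conj g).toMonoidHom :=
      Subgroup.mem_map_of_mem _ hx
    rw [MonoidHom.map_closure] at hmem
    have hle : Subgroup.closure ((MulAut.conj g).toMonoidHom '' S) ≤ Subgroup.closure S :=
      Subgroup.closure_mono (hconj g)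
    exact hle hmem
  refine ⟨hN, ?_, ?_⟩
  · -- the quotient is p-decomposable
    haveI := hN
    set N := Subgroup.closure S
    let π : G →* G ⧸ N := QuotientGroup.mk' N
    have hπ : Function.Surjective π := QuotientGroup.mk'_surjective N
    intro a b ha hb
    refine commute_of_commute_primePow hp a ?_ b hb
    rintro y ⟨q, m, hq, hqp, hym⟩
    obtain ⟨gb, rfl⟩ := hπ y
    obtain ⟨ga, rfl⟩ := hπ a
    obtain ⟨c, hcb, kc, hkc⟩ := lift_primePow π gb q hq ⟨m, hym⟩
    obtain ⟨c', hca, kc', hkc'⟩ := lift_primePow π ga p hp ha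
    have hmem : ⁅c', c⁆ ∈ N :=
      Subgroup.subset_closure ⟨c', c, ⟨kc', hkc'⟩, ⟨q, kc, hq, hqp, hkc⟩, rfl⟩
    have h1 : π ⁅c', c⁆ = 1 := (QuotientGroup.eq_one_iff _).mpr hmem
    rw [map_commutatorElement] at h1
    have := commutatorElement_eq_one_iff_commute.mp h1
    rwa [hca, hcb] at this
  · -- minimality
    intro M hM hdec
    haveI := hM
    rw [Subgroup.closure_le]
    rintro x ⟨a, b, ⟨n, han⟩, ⟨q, m, hq, hqp, hbm⟩, rfl⟩
    have hacomm : Commute ((a : G ⧸ M)) (b : G ⧸ M) := by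
      refine hdec _ _ ?_ ?_
      · have : orderOf ((a : G ⧸ M)) ∣ p ^ n := han ▸ orderOf_map_dvd (QuotientGroup.mk' M) a
        obtain ⟨k, _, hk⟩ := (Nat.dvd_prime_pow hp).mp this
        exact ⟨k, hk⟩
      · have hdvd : orderOf ((b : G ⧸ M)) ∣ q ^ m :=
          hbm ▸ orderOf_map_dvd (QuotientGroup.mk' M) b
        have hcop : Nat.Coprime (q ^ m) p :=
          Nat.Coprime.pow_left m ((Nat.coprime_primes hq hp).mpr hqp)
        exact hcop.coprime_dvd_left hdvd
    rw [← commutatorElement_eq_one_iff_commute] at hacomm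
    have h2 : ((⁅a, b⁆ : G) : G ⧸ M) = ⁅((a : G) : G ⧸ M), ((b : G) : G ⧸ M)⁆ :=
      map_commutatorElement (QuotientGroup.mk' M) a b
    exact (QuotientGroup.eq_one_iff _).mp (h2.trans hacomm)
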